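/- The series ∑_p ( log(1 − 1/p) + 1/p ) over all primes p converges absolutely, and its value lies in the interval (−0.32, −0.31). -/

import Mathlib

noncomputable def g : ℕ → ℝ := fun n => Real.log (1 - 1/(n:ℝ)) + 1/(n:ℝ)
noncomputable def F : ℕ → ℝ := fun n => if Nat.Prime n then g n else 0

lemma key {x : ℝ} (h0 : 0 < x) (h1 : x < 1) (n : ℕ) :
    x - (∑ i ∈ Finset.range n, x^(i+1)/(i+1)) - x^(n+1)/(1-x) ≤ Real.log (1-x) + x ∧
    Real.log (1-x) + x ≤ x - (∑ i ∈ Finset.range n, x^(i+1)/(i+1)) + x^(n+1)/(1-x) := by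
  have h := Real.abs_log_sub_add_sum_range_le (x := x) (by rw [abs_of_pos h0]; exact h1) n
  rw [abs_of_pos h0, abs_le] at h
  exact ⟨by linarith [h.1, h.2], by linarith [h.1, h.2]⟩

lemma g_abs_le {n : ℕ} (hn : 2 ≤ n) : |g n| ≤ 2 * ((n:ℝ)^2)⁻¹ := by
  have hn' : (2:ℝ) ≤ (n:ℝ) := by exact_mod_cast hn
  have h0 : (0:ℝ) < 1/(n:ℝ) := by positivity
  have h1 : 1/(n:ℝ) < 1 := by rw [div_lt_one (by linarith)]; linarith
  have h := key h0 h1 1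
  simp only [Finset.sum_range_one] at h
  rw [abs_le]
  have hn0 : (n:ℝ) ≠ 0 := by linarith
  have hhalf : (1:ℝ)/2 ≤ 1 - 1/(n:ℝ) := by
    have : 1/(n:ℝ) ≤ 1/2 := by rw [div_le_div_iff₀ (by linarith) (by norm_num)]; linarith
    linarith
  have hE : (1/(n:ℝ))^(1+1)/(1-1/(n:ℝ)) ≤ 2 * ((n:ℝ)^2)⁻¹ :=
    calc (1/(n:ℝ))^(1+1)/(1-1/(n:ℝ)) ≤ (1/(n:ℝ))^(1+1)/(1/2) :=
          div_le_div_of_nonneg_left (by positivity) (by norm_num) hhalf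
      _ = 2 * ((n:ℝ)^2)⁻¹ := by ring
  constructor
  · have := h.1; simp only [pow_one, g] at *; nlinarith [hE]
  · have := h.2; simp only [pow_one, g] at *; nlinarith [hE]

lemma hFabs : ∀ n, |F n| ≤ 2 * ((n:ℝ)^2)⁻¹ := by
  intro n
  by_cases hp : Nat.Prime n
  · simp only [F, if_pos hp]; exact g_abs_le hp.two_le
  · simp only [F, if_neg hp, abs_zero]; positivity

lemma hmaj : Summable (fun n : ℕ => 2 * ((n:ℝ)^2)⁻¹) := by
  have := (Real.summable_one_div_nat_pow (p := 2)).mpr one_lt_two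
  simpa [one_div] using this.mul_left 2

lemma hFabs_summable : Summable (fun n => |F n|) :=
  Summable.of_nonneg_of_le (fun _ => abs_nonneg _) hFabs hmaj

lemma hFsummable : Summable F := hFabs_summable.of_abs

lemma hconv : ∑' p : Nat.Primes, (Real.log (1 - 1 / ((p : ℕ) : ℝ)) + 1 / ((p : ℕ) : ℝ)) = ∑' n : ℕ, F n := by
  have hind : F = Set.indicator {n : ℕ | Nat.Prime n} g := by
    funext n; simp [F, Set.indicator]
  rw [hind, ← tsum_subtype]
  rfl

lemma habs_summable : Summable (fun p : Nat.Primes => |Real.log (1 - 1 / ((p : ℕ) : ℝ)) + 1 / ((p : ℕ) : ℝ)|) := by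
  have h := hFabs_summable.comp_injective Nat.Primes.coe_nat_injective
  refine h.congr fun p => ?_
  simp [Function.comp, F, p.2, g]

lemma g_tail {p : ℕ} (hp : 151 ≤ p) : |g p| ≤ 0.51 * (((p:ℝ)-1)⁻¹ - ((p:ℝ))⁻¹) := by
  have hq : (151:ℝ) ≤ (p:ℝ) := by exact_mod_cast hp
  set q : ℝ := (p:ℝ) with hqdef
  have hq0 : (0:ℝ) < q := by linarith
  have hq1 : (0:ℝ) < q - 1 := by linarith
  have h0 : (0:ℝ) < 1/q := by positivity
  have h1 : 1/q < 1 := by rw [div_lt_one hq0]; linarith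
  have h := key h0 h1 2
  simp only [Finset.sum_range_succ, Finset.sum_range_zero] at h
  have hg : g p = Real.log (1 - 1/q) + 1/q := rfl
  rw [hg, abs_le]
  have hkey : (1/q)^2/2 + (1/q)^3/(1-1/q) ≤ 0.51 * ((q-1)⁻¹ - q⁻¹) := by
    have h1q : 1 - 1/q = (q-1)/q := by field_simp
    have hdiff : 0.51 * ((q-1)⁻¹ - q⁻¹) - ((1/q)^2/2 + (1/q)^3/((q-1)/q))
        = (0.01*q - 0.5)/(q^2*(q-1)) := by field_simp; ring
    rw [h1q]
    have hpos : (0:ℝ) ≤ (0.01*q - 0.5)/(q^2*(q-1)) := by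
      apply div_nonneg (by linarith) (by positivity)
    linarith [hdiff]
  constructor
  · nlinarith [h.1, hkey]
  · nlinarith [h.2, hkey]

lemma htelescope : HasSum (fun i : ℕ => 0.51 * ((((i:ℝ)+150))⁻¹ - (((i:ℝ)+151))⁻¹)) (0.51 * (150:ℝ)⁻¹) := by
  have hps : ∀ n : ℕ, ∑ i ∈ Finset.range n, ((((i:ℝ)+150))⁻¹ - (((i:ℝ)+151))⁻¹)
      = (150:ℝ)⁻¹ - ((n:ℝ)+150)⁻¹ := by
    intro n
    have h := Finset.sum_range_sub' (fun i : ℕ => ((i:ℝ)+150)⁻¹) n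
    simp only [Nat.cast_zero, zero_add] at h
    rw [← h]
    apply Finset.sum_congr rfl
    intro i _
    congr 1
    push_cast
    ring
  have hnn : ∀ i : ℕ, (0:ℝ) ≤ (((i:ℝ)+150))⁻¹ - (((i:ℝ)+151))⁻¹ := by
    intro i
    rw [sub_nonneg]
    apply inv_anti₀ (by positivity) (by linarith)
  have hbase : HasSum (fun i : ℕ => (((i:ℝ)+150))⁻¹ - (((i:ℝ)+151))⁻¹) ((150:ℝ)⁻¹) := by
    rw [hasSum_iff_tendsto_nat_of_nonneg hnn]
    simp only [hps]
    have h2 : Filter.Tendsto (fun n : ℕ => ((n:ℝ)+150)⁻¹) Filter.atTop (nhds 0) := by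
      apply Filter.Tendsto.inv_tendsto_atTop
      apply Filter.tendsto_atTop_add_const_right
      exact tendsto_natCast_atTop_atTop
    have := (tendsto_const_nhds (x := (150:ℝ)⁻¹) (f := Filter.atTop (α := ℕ))).sub h2
    simpa using this
  exact hbase.mul_left 0.51

lemma tail_bound : |∑' i : ℕ, F (i + 151)| ≤ 0.0034 := by
  have hsum : Summable (fun i : ℕ => |F (i + 151)|) := (summable_nat_add_iff (f := fun n => |F n|) 151).mpr hFabs_summable
  have hsumF : Summable (fun i : ℕ => F (i + 151)) := (summable_nat_add_iff (f := F) 151).mpr hFsummable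
  have hle : ∀ i : ℕ, |F (i + 151)| ≤ 0.51 * ((((i:ℝ)+150))⁻¹ - (((i:ℝ)+151))⁻¹) := by
    intro i
    by_cases hp : Nat.Prime (i + 151)
    · have h := g_tail (p := i + 151) (by omega)
      simp only [F, if_pos hp]
      have hc : ((i + 151 : ℕ) : ℝ) = (i:ℝ) + 151 := by push_cast; ring
      rw [hc] at h
      have hc2 : (i:ℝ) + 151 - 1 = (i:ℝ) + 150 := by ring
      rw [hc2] at h
      exact h
    · simp only [F, if_neg hp, abs_zero]
      have : (0:ℝ) ≤ (((i:ℝ)+150))⁻¹ - (((i:ℝ)+151))⁻¹ := by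
        rw [sub_nonneg]
        apply inv_anti₀ (by positivity) (by linarith)
      linarith
  calc |∑' i : ℕ, F (i + 151)| ≤ ∑' i : ℕ, |F (i + 151)| := by
        simpa [Real.norm_eq_abs] using norm_tsum_le_tsum_norm (f := fun i : ℕ => F (i + 151)) hsum
    _ ≤ ∑' i : ℕ, 0.51 * ((((i:ℝ)+150))⁻¹ - (((i:ℝ)+151))⁻¹) :=
        Summable.tsum_le_tsum hle hsum htelescope.summable
    _ = 0.51 * (150:ℝ)⁻¹ := htelescope.tsum_eq
    _ ≤ 0.0034 := by norm_num

set_option maxHeartbeats 8000000 in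
lemma finite_bounds : (-0.315167:ℝ) ≤ ∑ i ∈ Finset.range 151, F i ∧
    ∑ i ∈ Finset.range 151, F i ≤ (-0.315161:ℝ) := by
  have h2 : (-0.193148091:ℝ) ≤ Real.log (1 - 1/((2:ℕ):ℝ)) + 1/((2:ℕ):ℝ) ∧
      Real.log (1 - 1/((2:ℕ):ℝ)) + 1/((2:ℕ):ℝ) ≤ (-0.193146183:ℝ) := by
    have h := key (x := 1/((2:ℕ):ℝ)) (by norm_num) (by norm_num) 20
    simp only [Finset.sum_range_succ, Finset.sum_range_zero] at h
    norm_num at h ⊢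
    exact ⟨by linarith [h.1], by linarith [h.2]⟩
  have h3 : (-0.072132067:ℝ) ≤ Real.log (1 - 1/((3:ℕ):ℝ)) + 1/((3:ℕ):ℝ) ∧
      Real.log (1 - 1/((3:ℕ):ℝ)) + 1/((3:ℕ):ℝ) ≤ (-0.072131439:ℝ) := by
    have h := key (x := 1/((3:ℕ):ℝ)) (by norm_num) (by norm_num) 13
    simp only [Finset.sum_range_succ, Finset.sum_range_zero] at h
    norm_num at h ⊢
    exact ⟨by linarith [h.1], by linarith [h.2]⟩
  have h5 : (-0.023143575:ℝ) ≤ Real.log (1 - 1/((5:ℕ):ℝ)) + 1/((5:ℕ):ℝ) ∧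
      Real.log (1 - 1/((5:ℕ):ℝ)) + 1/((5:ℕ):ℝ) ≤ (-0.023143523:ℝ) := by
    have h := key (x := 1/((5:ℕ):ℝ)) (by norm_num) (by norm_num) 10
    simp only [Finset.sum_range_succ, Finset.sum_range_zero] at h
    norm_num at h ⊢
    exact ⟨by linarith [h.1], by linarith [h.2]⟩
  have h7 : (-0.011293563:ℝ) ≤ Real.log (1 - 1/((7:ℕ):ℝ)) + 1/((7:ℕ):ℝ) ∧
      Real.log (1 - 1/((7:ℕ):ℝ)) + 1/((7:ℕ):ℝ) ≤ (-0.011293504:ℝ) := by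
    have h := key (x := 1/((7:ℕ):ℝ)) (by norm_num) (by norm_num) 8
    simp only [Finset.sum_range_succ, Finset.sum_range_zero] at h
    norm_num at h ⊢
    exact ⟨by linarith [h.1], by linarith [h.2]⟩
  have h11 : (-0.004401608:ℝ) ≤ Real.log (1 - 1/((11:ℕ):ℝ)) + 1/((11:ℕ):ℝ) ∧
      Real.log (1 - 1/((11:ℕ):ℝ)) + 1/((11:ℕ):ℝ) ≤ (-0.004400365:ℝ) := by
    have h := key (x := 1/((11:ℕ):ℝ)) (by norm_num) (by norm_num) 5
    simp only [Finset.sum_range_succ, Finset.sum_range_zero] at h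
    norm_num at h ⊢
    exact ⟨by linarith [h.1], by linarith [h.2]⟩
  have h13 : (-0.003119819:ℝ) ≤ Real.log (1 - 1/((13:ℕ):ℝ)) + 1/((13:ℕ):ℝ) ∧
      Real.log (1 - 1/((13:ℕ):ℝ)) + 1/((13:ℕ):ℝ) ≤ (-0.003119369:ℝ) := by
    have h := key (x := 1/((13:ℕ):ℝ)) (by norm_num) (by norm_num) 5
    simp only [Finset.sum_range_succ, Finset.sum_range_zero] at h
    norm_num at h ⊢
    exact ⟨by linarith [h.1], by linarith [h.2]⟩
  have h17 : (-0.001801130:ℝ) ≤ Real.log (1 - 1/((17:ℕ):ℝ)) + 1/((17:ℕ):ℝ) ∧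
      Real.log (1 - 1/((17:ℕ):ℝ)) + 1/((17:ℕ):ℝ) ≤ (-0.001801041:ℝ) := by
    have h := key (x := 1/((17:ℕ):ℝ)) (by norm_num) (by norm_num) 5
    simp only [Finset.sum_range_succ, Finset.sum_range_zero] at h
    norm_num at h ⊢
    exact ⟨by linarith [h.1], by linarith [h.2]⟩
  have h19 : (-0.001435662:ℝ) ≤ Real.log (1 - 1/((19:ℕ):ℝ)) + 1/((19:ℕ):ℝ) ∧
      Real.log (1 - 1/((19:ℕ):ℝ)) + 1/((19:ℕ):ℝ) ≤ (-0.001435616:ℝ) := by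
    have h := key (x := 1/((19:ℕ):ℝ)) (by norm_num) (by norm_num) 5
    simp only [Finset.sum_range_succ, Finset.sum_range_zero] at h
    norm_num at h ⊢
    exact ⟨by linarith [h.1], by linarith [h.2]⟩
  have h23 : (-0.000973508:ℝ) ≤ Real.log (1 - 1/((23:ℕ):ℝ)) + 1/((23:ℕ):ℝ) ∧
      Real.log (1 - 1/((23:ℕ):ℝ)) + 1/((23:ℕ):ℝ) ≤ (-0.000973493:ℝ) := by
    have h := key (x := 1/((23:ℕ):ℝ)) (by norm_num) (by norm_num) 5
    simp only [Finset.sum_range_succ, Finset.sum_range_zero] at h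
    norm_num at h ⊢
    exact ⟨by linarith [h.1], by linarith [h.2]⟩
  have h29 : (-0.000608563:ℝ) ≤ Real.log (1 - 1/((29:ℕ):ℝ)) + 1/((29:ℕ):ℝ) ∧
      Real.log (1 - 1/((29:ℕ):ℝ)) + 1/((29:ℕ):ℝ) ≤ (-0.000608559:ℝ) := by
    have h := key (x := 1/((29:ℕ):ℝ)) (by norm_num) (by norm_num) 5
    simp only [Finset.sum_range_succ, Finset.sum_range_zero] at h
    norm_num at h ⊢
    exact ⟨by linarith [h.1], by linarith [h.2]⟩
  have h31 : (-0.000531760:ℝ) ≤ Real.log (1 - 1/((31:ℕ):ℝ)) + 1/((31:ℕ):ℝ) ∧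
      Real.log (1 - 1/((31:ℕ):ℝ)) + 1/((31:ℕ):ℝ) ≤ (-0.000531756:ℝ) := by
    have h := key (x := 1/((31:ℕ):ℝ)) (by norm_num) (by norm_num) 5
    simp only [Finset.sum_range_succ, Finset.sum_range_zero] at h
    norm_num at h ⊢
    exact ⟨by linarith [h.1], by linarith [h.2]⟩
  have h37 : (-0.000371948:ℝ) ≤ Real.log (1 - 1/((37:ℕ):ℝ)) + 1/((37:ℕ):ℝ) ∧
      Real.log (1 - 1/((37:ℕ):ℝ)) + 1/((37:ℕ):ℝ) ≤ (-0.000371946:ℝ) := by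
    have h := key (x := 1/((37:ℕ):ℝ)) (by norm_num) (by norm_num) 5
    simp only [Finset.sum_range_succ, Finset.sum_range_zero] at h
    norm_num at h ⊢
    exact ⟨by linarith [h.1], by linarith [h.2]⟩
  have h41 : (-0.000302376:ℝ) ≤ Real.log (1 - 1/((41:ℕ):ℝ)) + 1/((41:ℕ):ℝ) ∧
      Real.log (1 - 1/((41:ℕ):ℝ)) + 1/((41:ℕ):ℝ) ≤ (-0.000302358:ℝ) := by
    have h := key (x := 1/((41:ℕ):ℝ)) (by norm_num) (by norm_num) 4
    simp only [Finset.sum_range_succ, Finset.sum_range_zero] at h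
    norm_num at h ⊢
    exact ⟨by linarith [h.1], by linarith [h.2]⟩
  have h43 : (-0.000274690:ℝ) ≤ Real.log (1 - 1/((43:ℕ):ℝ)) + 1/((43:ℕ):ℝ) ∧
      Real.log (1 - 1/((43:ℕ):ℝ)) + 1/((43:ℕ):ℝ) ≤ (-0.000274675:ℝ) := by
    have h := key (x := 1/((43:ℕ):ℝ)) (by norm_num) (by norm_num) 4
    simp only [Finset.sum_range_succ, Finset.sum_range_zero] at h
    norm_num at h ⊢
    exact ⟨by linarith [h.1], by linarith [h.2]⟩
  have h47 : (-0.000229614:ℝ) ≤ Real.log (1 - 1/((47:ℕ):ℝ)) + 1/((47:ℕ):ℝ) ∧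
      Real.log (1 - 1/((47:ℕ):ℝ)) + 1/((47:ℕ):ℝ) ≤ (-0.000229604:ℝ) := by
    have h := key (x := 1/((47:ℕ):ℝ)) (by norm_num) (by norm_num) 4
    simp only [Finset.sum_range_succ, Finset.sum_range_zero] at h
    norm_num at h ⊢
    exact ⟨by linarith [h.1], by linarith [h.2]⟩
  have h53 : (-0.000180273:ℝ) ≤ Real.log (1 - 1/((53:ℕ):ℝ)) + 1/((53:ℕ):ℝ) ∧
      Real.log (1 - 1/((53:ℕ):ℝ)) + 1/((53:ℕ):ℝ) ≤ (-0.000180267:ℝ) := by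
    have h := key (x := 1/((53:ℕ):ℝ)) (by norm_num) (by norm_num) 4
    simp only [Finset.sum_range_succ, Finset.sum_range_zero] at h
    norm_num at h ⊢
    exact ⟨by linarith [h.1], by linarith [h.2]⟩
  have h59 : (-0.000145282:ℝ) ≤ Real.log (1 - 1/((59:ℕ):ℝ)) + 1/((59:ℕ):ℝ) ∧
      Real.log (1 - 1/((59:ℕ):ℝ)) + 1/((59:ℕ):ℝ) ≤ (-0.000145279:ℝ) := by
    have h := key (x := 1/((59:ℕ):ℝ)) (by norm_num) (by norm_num) 4
    simp only [Finset.sum_range_succ, Finset.sum_range_zero] at h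
    norm_num at h ⊢
    exact ⟨by linarith [h.1], by linarith [h.2]⟩
  have h61 : (-0.000135861:ℝ) ≤ Real.log (1 - 1/((61:ℕ):ℝ)) + 1/((61:ℕ):ℝ) ∧
      Real.log (1 - 1/((61:ℕ):ℝ)) + 1/((61:ℕ):ℝ) ≤ (-0.000135857:ℝ) := by
    have h := key (x := 1/((61:ℕ):ℝ)) (by norm_num) (by norm_num) 4
    simp only [Finset.sum_range_succ, Finset.sum_range_zero] at h
    norm_num at h ⊢
    exact ⟨by linarith [h.1], by linarith [h.2]⟩
  have h67 : (-0.000112505:ℝ) ≤ Real.log (1 - 1/((67:ℕ):ℝ)) + 1/((67:ℕ):ℝ) ∧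
      Real.log (1 - 1/((67:ℕ):ℝ)) + 1/((67:ℕ):ℝ) ≤ (-0.000112503:ℝ) := by
    have h := key (x := 1/((67:ℕ):ℝ)) (by norm_num) (by norm_num) 4
    simp only [Finset.sum_range_succ, Finset.sum_range_zero] at h
    norm_num at h ⊢
    exact ⟨by linarith [h.1], by linarith [h.2]⟩
  have h71 : (-0.000100129:ℝ) ≤ Real.log (1 - 1/((71:ℕ):ℝ)) + 1/((71:ℕ):ℝ) ∧
      Real.log (1 - 1/((71:ℕ):ℝ)) + 1/((71:ℕ):ℝ) ≤ (-0.000100127:ℝ) := by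
    have h := key (x := 1/((71:ℕ):ℝ)) (by norm_num) (by norm_num) 4
    simp only [Finset.sum_range_succ, Finset.sum_range_zero] at h
    norm_num at h ⊢
    exact ⟨by linarith [h.1], by linarith [h.2]⟩
  have h73 : (-0.000094693:ℝ) ≤ Real.log (1 - 1/((73:ℕ):ℝ)) + 1/((73:ℕ):ℝ) ∧
      Real.log (1 - 1/((73:ℕ):ℝ)) + 1/((73:ℕ):ℝ) ≤ (-0.000094691:ℝ) := by
    have h := key (x := 1/((73:ℕ):ℝ)) (by norm_num) (by norm_num) 4
    simp only [Finset.sum_range_succ, Finset.sum_range_zero] at h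
    norm_num at h ⊢
    exact ⟨by linarith [h.1], by linarith [h.2]⟩
  have h79 : (-0.000080799:ℝ) ≤ Real.log (1 - 1/((79:ℕ):ℝ)) + 1/((79:ℕ):ℝ) ∧
      Real.log (1 - 1/((79:ℕ):ℝ)) + 1/((79:ℕ):ℝ) ≤ (-0.000080797:ℝ) := by
    have h := key (x := 1/((79:ℕ):ℝ)) (by norm_num) (by norm_num) 4
    simp only [Finset.sum_range_succ, Finset.sum_range_zero] at h
    norm_num at h ⊢
    exact ⟨by linarith [h.1], by linarith [h.2]⟩
  have h83 : (-0.000073168:ℝ) ≤ Real.log (1 - 1/((83:ℕ):ℝ)) + 1/((83:ℕ):ℝ) ∧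
      Real.log (1 - 1/((83:ℕ):ℝ)) + 1/((83:ℕ):ℝ) ≤ (-0.000073167:ℝ) := by
    have h := key (x := 1/((83:ℕ):ℝ)) (by norm_num) (by norm_num) 4
    simp only [Finset.sum_range_succ, Finset.sum_range_zero] at h
    norm_num at h ⊢
    exact ⟨by linarith [h.1], by linarith [h.2]⟩
  have h89 : (-0.000063601:ℝ) ≤ Real.log (1 - 1/((89:ℕ):ℝ)) + 1/((89:ℕ):ℝ) ∧
      Real.log (1 - 1/((89:ℕ):ℝ)) + 1/((89:ℕ):ℝ) ≤ (-0.000063599:ℝ) := by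
    have h := key (x := 1/((89:ℕ):ℝ)) (by norm_num) (by norm_num) 4
    simp only [Finset.sum_range_succ, Finset.sum_range_zero] at h
    norm_num at h ⊢
    exact ⟨by linarith [h.1], by linarith [h.2]⟩
  have h97 : (-0.000053509:ℝ) ≤ Real.log (1 - 1/((97:ℕ):ℝ)) + 1/((97:ℕ):ℝ) ∧
      Real.log (1 - 1/((97:ℕ):ℝ)) + 1/((97:ℕ):ℝ) ≤ (-0.000053508:ℝ) := by
    have h := key (x := 1/((97:ℕ):ℝ)) (by norm_num) (by norm_num) 4
    simp only [Finset.sum_range_succ, Finset.sum_range_zero] at h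
    norm_num at h ⊢
    exact ⟨by linarith [h.1], by linarith [h.2]⟩
  have h101 : (-0.000049341:ℝ) ≤ Real.log (1 - 1/((101:ℕ):ℝ)) + 1/((101:ℕ):ℝ) ∧
      Real.log (1 - 1/((101:ℕ):ℝ)) + 1/((101:ℕ):ℝ) ≤ (-0.000049340:ℝ) := by
    have h := key (x := 1/((101:ℕ):ℝ)) (by norm_num) (by norm_num) 4
    simp only [Finset.sum_range_succ, Finset.sum_range_zero] at h
    norm_num at h ⊢
    exact ⟨by linarith [h.1], by linarith [h.2]⟩
  have h103 : (-0.000047438:ℝ) ≤ Real.log (1 - 1/((103:ℕ):ℝ)) + 1/((103:ℕ):ℝ) ∧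
      Real.log (1 - 1/((103:ℕ):ℝ)) + 1/((103:ℕ):ℝ) ≤ (-0.000047436:ℝ) := by
    have h := key (x := 1/((103:ℕ):ℝ)) (by norm_num) (by norm_num) 4
    simp only [Finset.sum_range_succ, Finset.sum_range_zero] at h
    norm_num at h ⊢
    exact ⟨by linarith [h.1], by linarith [h.2]⟩
  have h107 : (-0.000043947:ℝ) ≤ Real.log (1 - 1/((107:ℕ):ℝ)) + 1/((107:ℕ):ℝ) ∧
      Real.log (1 - 1/((107:ℕ):ℝ)) + 1/((107:ℕ):ℝ) ≤ (-0.000043945:ℝ) := by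
    have h := key (x := 1/((107:ℕ):ℝ)) (by norm_num) (by norm_num) 4
    simp only [Finset.sum_range_succ, Finset.sum_range_zero] at h
    norm_num at h ⊢
    exact ⟨by linarith [h.1], by linarith [h.2]⟩
  have h109 : (-0.000042344:ℝ) ≤ Real.log (1 - 1/((109:ℕ):ℝ)) + 1/((109:ℕ):ℝ) ∧
      Real.log (1 - 1/((109:ℕ):ℝ)) + 1/((109:ℕ):ℝ) ≤ (-0.000042343:ℝ) := by
    have h := key (x := 1/((109:ℕ):ℝ)) (by norm_num) (by norm_num) 4
    simp only [Finset.sum_range_succ, Finset.sum_range_zero] at h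
    norm_num at h ⊢
    exact ⟨by linarith [h.1], by linarith [h.2]⟩
  have h113 : (-0.000039390:ℝ) ≤ Real.log (1 - 1/((113:ℕ):ℝ)) + 1/((113:ℕ):ℝ) ∧
      Real.log (1 - 1/((113:ℕ):ℝ)) + 1/((113:ℕ):ℝ) ≤ (-0.000039389:ℝ) := by
    have h := key (x := 1/((113:ℕ):ℝ)) (by norm_num) (by norm_num) 4
    simp only [Finset.sum_range_succ, Finset.sum_range_zero] at h
    norm_num at h ⊢
    exact ⟨by linarith [h.1], by linarith [h.2]⟩
  have h127 : (-0.000031164:ℝ) ≤ Real.log (1 - 1/((127:ℕ):ℝ)) + 1/((127:ℕ):ℝ) ∧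
      Real.log (1 - 1/((127:ℕ):ℝ)) + 1/((127:ℕ):ℝ) ≤ (-0.000031163:ℝ) := by
    have h := key (x := 1/((127:ℕ):ℝ)) (by norm_num) (by norm_num) 4
    simp only [Finset.sum_range_succ, Finset.sum_range_zero] at h
    norm_num at h ⊢
    exact ⟨by linarith [h.1], by linarith [h.2]⟩
  have h131 : (-0.000029285:ℝ) ≤ Real.log (1 - 1/((131:ℕ):ℝ)) + 1/((131:ℕ):ℝ) ∧
      Real.log (1 - 1/((131:ℕ):ℝ)) + 1/((131:ℕ):ℝ) ≤ (-0.000029284:ℝ) := by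
    have h := key (x := 1/((131:ℕ):ℝ)) (by norm_num) (by norm_num) 4
    simp only [Finset.sum_range_succ, Finset.sum_range_zero] at h
    norm_num at h ⊢
    exact ⟨by linarith [h.1], by linarith [h.2]⟩
  have h137 : (-0.000026771:ℝ) ≤ Real.log (1 - 1/((137:ℕ):ℝ)) + 1/((137:ℕ):ℝ) ∧
      Real.log (1 - 1/((137:ℕ):ℝ)) + 1/((137:ℕ):ℝ) ≤ (-0.000026769:ℝ) := by
    have h := key (x := 1/((137:ℕ):ℝ)) (by norm_num) (by norm_num) 4
    simp only [Finset.sum_range_succ, Finset.sum_range_zero] at h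
    norm_num at h ⊢
    exact ⟨by linarith [h.1], by linarith [h.2]⟩
  have h139 : (-0.000026004:ℝ) ≤ Real.log (1 - 1/((139:ℕ):ℝ)) + 1/((139:ℕ):ℝ) ∧
      Real.log (1 - 1/((139:ℕ):ℝ)) + 1/((139:ℕ):ℝ) ≤ (-0.000026003:ℝ) := by
    have h := key (x := 1/((139:ℕ):ℝ)) (by norm_num) (by norm_num) 4
    simp only [Finset.sum_range_succ, Finset.sum_range_zero] at h
    norm_num at h ⊢
    exact ⟨by linarith [h.1], by linarith [h.2]⟩
  have h149 : (-0.000022623:ℝ) ≤ Real.log (1 - 1/((149:ℕ):ℝ)) + 1/((149:ℕ):ℝ) ∧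
      Real.log (1 - 1/((149:ℕ):ℝ)) + 1/((149:ℕ):ℝ) ≤ (-0.000022622:ℝ) := by
    have h := key (x := 1/((149:ℕ):ℝ)) (by norm_num) (by norm_num) 4
    simp only [Finset.sum_range_succ, Finset.sum_range_zero] at h
    norm_num at h ⊢
    exact ⟨by linarith [h.1], by linarith [h.2]⟩
  constructor
  · simp only [F, g, Finset.sum_range_succ, Finset.sum_range_zero]
    norm_num
    linarith [h2.1, h3.1, h5.1, h7.1, h11.1, h13.1, h17.1, h19.1, h23.1, h29.1, h31.1, h37.1, h41.1, h43.1, h47.1, h53.1, h59.1, h61.1, h67.1, h71.1, h73.1, h79.1, h83.1, h89.1, h97.1, h101.1, h103.1, h107.1, h109.1, h113.1, h127.1, h131.1, h137.1, h139.1, h149.1]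
  · simp only [F, g, Finset.sum_range_succ, Finset.sum_range_zero]
    norm_num
    linarith [h2.2, h3.2, h5.2, h7.2, h11.2, h13.2, h17.2, h19.2, h23.2, h29.2, h31.2, h37.2, h41.2, h43.2, h47.2, h53.2, h59.2, h61.2, h67.2, h71.2, h73.2, h79.2, h83.2, h89.2, h97.2, h101.2, h103.2, h107.2, h109.2, h113.2, h127.2, h131.2, h137.2, h139.2, h149.2]

/-- The series `∑_p (log(1 − 1/p) + 1/p)` over all primes converges absolutely,
and its value lies in `(−0.32, −0.31)`. -/
theorem sum_log_one_sub_inv_p : 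
    Summable (fun p : Nat.Primes => |Real.log (1 - 1 / ((p : ℕ) : ℝ)) + 1 / ((p : ℕ) : ℝ)|) ∧
    (-0.32 : ℝ) < ∑' p : Nat.Primes, (Real.log (1 - 1 / ((p : ℕ) : ℝ)) + 1 / ((p : ℕ) : ℝ)) ∧
    (∑' p : Nat.Primes, (Real.log (1 - 1 / ((p : ℕ) : ℝ)) + 1 / ((p : ℕ) : ℝ))) < -0.31 := by
  refine ⟨habs_summable, ?_, ?_⟩ <;>
  · rw [hconv, ← Summable.sum_add_tsum_nat_add 151 hFsummable]
    have h1 := finite_bounds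
    have h2 := tail_bound
    rw [abs_le] at h2
    have := h1.1; have := h1.2; have := h2.1; have := h2.2
    linarith
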